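/- The relaxed Weisfeiler-Lehman subtree kernel generalizes the Weisfeiler-Lehman subtree kernel: let 𝒢 be a set of finite labeled graphs and h ∈ ℕ, and suppose for each i ∈ {0, ..., h} that Θ_i = {ρ_i} is a singleton where ρ_i : 𝒯^{(i)} → [k_i] satisfies ρ_i(T) = ρ_i(T') if and only if T and T' are isomorphic (equivalently, SdTed(T, T') = 0). Then for all G, G' ∈ 𝒢, k^h_{R-WL}(G, G') = k^h_{WL}(G, G'), where k^h_{WL}(G, G') = Σ_{i=0}^{h} Σ_{v ∈ V(G)} Σ_{v' ∈ V(G')} δ(ℓ_i(v), ℓ_i(v')) is the Weisfeiler-Lehman subtree kernel computed with Weisfeiler-Lehman labels ℓ_i obtained from an injective hash function. -/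

import Mathlib

open scoped Classical

/-- A finite undirected labeled graph: vertices `Fin n`, a symmetric
irreflexive neighborhood relation given by `nbr`, and a vertex labeling
with values in `σ`. -/
structure LGraph (σ : Type) where
  n : ℕ
  nbr : Fin n → Finset (Fin n)
  symm : ∀ u v, u ∈ nbr v → v ∈ nbr u
  irrefl : ∀ v, v ∉ nbr v
  label : Fin n → σ

/-- The type of isomorphism classes of depth-`i` unfolding trees over label
alphabet `σ`: a depth-0 unfolding tree is just a root label, and a
depth-`(i+1)` unfolding tree is a root label together with the multiset of
its depth-`i` child subtrees. (Using multisets of children makes equality in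
`UT σ i` coincide with isomorphism of rooted labeled trees.) -/
def UT (σ : Type) : ℕ → Type
  | 0 => σ
  | (i + 1) => σ × Multiset (UT σ i)

/-- The depth-`i` unfolding tree `T^i(G, v)` of the graph `G` at vertex `v`
(as an isomorphism class): the root is labeled `ℓ₀(v)` and its child subtrees
are the depth-`(i-1)` unfolding trees at the neighbors of `v`. -/
def utree {σ : Type} (G : LGraph σ) : (i : ℕ) → Fin G.n → UT σ i
  | 0, v => G.label v
  | (i + 1), v => (G.label v, (G.nbr v).val.map (utree G i))

/-- The Weisfeiler-Lehman labels of a graph `G` whose vertices are initially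
labeled over `Λ 0`, computed with hash functions `hash i` mapping the pair of
a vertex's current label and the multiset of its neighbors' current labels to
a new label in `Λ (i+1)`. -/
def wl {Λ : ℕ → Type} (hash : ∀ i, Λ i → Multiset (Λ i) → Λ (i + 1))
    (G : LGraph (Λ 0)) : (i : ℕ) → Fin G.n → Λ i
  | 0 => G.label
  | (i + 1) => fun v => hash i (wl hash G i v) ((G.nbr v).val.map (wl hash G i))

/-- The relaxed Weisfeiler-Lehman subtree kernel of depth `h` with respect to
families `Θ i` of hard clustering functions on (isomorphism classes of)
depth-`i` unfolding trees:
`k(G, G') = ∑_{i ≤ h} ∑_{ρ ∈ Θ i} ∑_{v} ∑_{v'} δ(ρ(T^i(G,v)), ρ(T^i(G',v')))`. -/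
noncomputable def kRWL {σ : Type} (h : ℕ) (Θ : (i : ℕ) → Finset (UT σ i → ℕ))
    (G G' : LGraph σ) : ℝ :=
  ∑ i ∈ Finset.range (h + 1), ∑ ρ ∈ Θ i,
    ∑ v : Fin G.n, ∑ v' : Fin G'.n,
      if ρ (utree G i v) = ρ (utree G' i v') then 1 else 0

/-- The root label of an unfolding tree. -/
def rootLabel {σ : Type} : {i : ℕ} → UT σ i → σ
  | 0, t => t
  | (_ + 1), t => t.1

/-- Truncating an unfolding tree by one level. -/
def truncUT {σ : Type} : {i : ℕ} → UT σ (i + 1) → UT σ i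
  | 0, t => t.1
  | (_ + 1), t => (t.1, t.2.map truncUT)

lemma truncUT_utree {σ : Type} (G : LGraph σ) :
    ∀ (i : ℕ) (v : Fin G.n), truncUT (utree G (i + 1) v) = utree G i v := by
  intro i
  induction i with
  | zero => intro v; rfl
  | succ j ih =>
    intro v
    simp only [utree, truncUT, Multiset.map_map]
    exact congrArg _ ((Multiset.map_map _ _ _).trans (Multiset.map_congr rfl fun u _ => ih u))

lemma rootLabel_utree {σ : Type} (G : LGraph σ) (i : ℕ) (v : Fin G.n) :
    rootLabel (utree G i v) = G.label v := by
  cases i <;> rfl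

/-- WL labels agree iff the corresponding unfolding trees are equal. -/
lemma wl_eq_iff_utree_eq {Λ : ℕ → Type}
    (hash : ∀ i, Λ i → Multiset (Λ i) → Λ (i + 1))
    (hinj : ∀ i a₁ m₁ a₂ m₂, hash i a₁ m₁ = hash i a₂ m₂ → a₁ = a₂ ∧ m₁ = m₂) :
    ∀ (i : ℕ) (G G' : LGraph (Λ 0)) (v : Fin G.n) (v' : Fin G'.n),
      wl hash G i v = wl hash G' i v' ↔ utree G i v = utree G' i v' := by
  intro i
  induction i with
  | zero => intro G G' v v'; simp [wl, utree]; exact Iff.rfl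
  | succ i ih =>
    intro G G' v v'
    constructor
    · intro hwl
      simp only [wl] at hwl
      obtain ⟨h1, h2⟩ := hinj i _ _ _ _ hwl
      have hlab : G.label v = G'.label v' := by
        rw [← rootLabel_utree G i v, ← rootLabel_utree G' i v',
          (ih G G' v v').mp h1]
      have hmap : (G.nbr v).val.map (utree G i) =
          (G'.nbr v').val.map (utree G' i) := by
        rw [← Multiset.rel_eq, Multiset.rel_map]
        have := Multiset.rel_map.mp (Multiset.rel_eq.mpr h2)
        exact this.mono fun a _ b _ hab => (ih G G' a b).mp hab
      simp only [utree]
      exact Prod.ext hlab hmap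
    · intro hut
      have hwl1 : wl hash G i v = wl hash G' i v' := (ih G G' v v').mpr <| by
        rw [← truncUT_utree G i v, ← truncUT_utree G' i v', hut]
      have h2 : (G.nbr v).val.map (utree G i) =
          (G'.nbr v').val.map (utree G' i) := congrArg Prod.snd hut
      have hmap : (G.nbr v).val.map (wl hash G i) =
          (G'.nbr v').val.map (wl hash G' i) := by
        rw [← Multiset.rel_eq, Multiset.rel_map]
        have := Multiset.rel_map.mp (Multiset.rel_eq.mpr h2)
        exact this.mono fun a _ b _ hab => (ih G G' a b).mpr hab
      simp only [wl]
      rw [hwl1, hmap]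

/-- The relaxed Weisfeiler-Lehman subtree kernel generalizes
the Weisfeiler-Lehman subtree kernel: let `𝒢` be a set of graphs and suppose
that for each `i ≤ h` the family `Θ i` is the singleton `{ρ i}`, where the
hard clustering function `ρ i` satisfies `ρ i T = ρ i T'` iff the unfolding
trees `T, T'` of `𝒢` are isomorphic (i.e. equal as elements of `UT (Λ 0) i`).
Then for all `G, G' ∈ 𝒢` the relaxed kernel coincides with the
Weisfeiler-Lehman subtree kernel
`k^h_{WL}(G, G') = ∑_{i ≤ h} ∑_v ∑_{v'} δ(ℓᵢ(v), ℓᵢ(v'))`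
computed with WL labels `ℓᵢ` obtained from injective hash functions. -/
theorem kRWL_generalizes_kWL {Λ : ℕ → Type}
    (hash : ∀ i, Λ i → Multiset (Λ i) → Λ (i + 1))
    (hinj : ∀ i a₁ m₁ a₂ m₂, hash i a₁ m₁ = hash i a₂ m₂ → a₁ = a₂ ∧ m₁ = m₂)
    (h : ℕ) (𝒢 : Set (LGraph (Λ 0))) (ρ : (i : ℕ) → UT (Λ 0) i → ℕ)
    (hρ : ∀ i ≤ h, ∀ H ∈ 𝒢, ∀ H' ∈ 𝒢, ∀ (w : Fin H.n) (w' : Fin H'.n),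
      ρ i (utree H i w) = ρ i (utree H' i w') ↔ utree H i w = utree H' i w')
    (G G' : LGraph (Λ 0)) (hG : G ∈ 𝒢) (hG' : G' ∈ 𝒢) :
    kRWL h (fun i => {ρ i}) G G' =
      ∑ i ∈ Finset.range (h + 1), ∑ v : Fin G.n, ∑ v' : Fin G'.n,
        if wl hash G i v = wl hash G' i v' then (1 : ℝ) else 0 := by
  unfold kRWL
  refine Finset.sum_congr rfl fun i hi => ?_
  rw [Finset.sum_singleton]
  refine Finset.sum_congr rfl fun v _ => Finset.sum_congr rfl fun v' _ => ?_
  have hih : i ≤ h := Nat.lt_succ_iff.mp (Finset.mem_range.mp hi)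
  exact if_congr ((hρ i hih G hG G' hG' v v').trans
    (wl_eq_iff_utree_eq hash hinj i G G' v v').symm) rfl rfl
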